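/- With notation as in the standing completion setup, let M be a left module over H(R, φ, z) on which x acts locally nilpotently. Then τ acts locally nilpotently on M, so the R-module structure on M extends uniquely to an R̂-module structure (each r̂ ∈ R̂ acts on m ∈ M through any preimage of its image in R/(τⁿ) for n with τⁿ·m = 0). With respect to this structure, e·M = M^{z^∞}, where M^{z^∞} = {m ∈ M : zⁿ·m = 0 for some n}. -/

import Mathlib

universe u
section GWADefs

variable (R : Type u) [Ring R] (φ : R ≃+* R) (z : R)

/-- The defining relations of the generalized Weyl algebra `H(R, φ, z)`, presented as a quotient
of the free `ℤ`-algebra on the underlying set of `R` together with two generators `x` (encoded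
as `Sum.inr 0`) and `y` (encoded as `Sum.inr 1`).  The first three families of relations encode
the ring structure of `R`; the remaining ones are the GWA relations
`yx = z`, `xy = φ⁻¹(z)`, `xr = φ⁻¹(r)x`, `yr = φ(r)y`. -/
inductive GWARel : FreeAlgebra ℤ (R ⊕ Fin 2) → FreeAlgebra ℤ (R ⊕ Fin 2) → Prop
  | add (r s : R) : GWARel
      (FreeAlgebra.ι ℤ (Sum.inl r) + FreeAlgebra.ι ℤ (Sum.inl s))
      (FreeAlgebra.ι ℤ (Sum.inl (r + s)))
  | mul (r s : R) : GWARel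
      (FreeAlgebra.ι ℤ (Sum.inl r) * FreeAlgebra.ι ℤ (Sum.inl s))
      (FreeAlgebra.ι ℤ (Sum.inl (r * s)))
  | one : GWARel (FreeAlgebra.ι ℤ (Sum.inl (1 : R))) 1
  | yx : GWARel (FreeAlgebra.ι ℤ (Sum.inr 1) * FreeAlgebra.ι ℤ (Sum.inr 0))
      (FreeAlgebra.ι ℤ (Sum.inl z))
  | xy : GWARel (FreeAlgebra.ι ℤ (Sum.inr 0) * FreeAlgebra.ι ℤ (Sum.inr 1))
      (FreeAlgebra.ι ℤ (Sum.inl (φ.symm z)))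
  | xr (r : R) : GWARel (FreeAlgebra.ι ℤ (Sum.inr 0) * FreeAlgebra.ι ℤ (Sum.inl r))
      (FreeAlgebra.ι ℤ (Sum.inl (φ.symm r)) * FreeAlgebra.ι ℤ (Sum.inr 0))
  | yr (r : R) : GWARel (FreeAlgebra.ι ℤ (Sum.inr 1) * FreeAlgebra.ι ℤ (Sum.inl r))
      (FreeAlgebra.ι ℤ (Sum.inl (φ r)) * FreeAlgebra.ι ℤ (Sum.inr 1))

/-- The generalized Weyl algebra `H(R, φ, z)`. -/
abbrev GWA : Type u := RingQuot (GWARel R φ z)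

/-- The generator `x` of the generalized Weyl algebra. -/
noncomputable def GWA.X : GWA R φ z :=
  RingQuot.mkRingHom (GWARel R φ z) (FreeAlgebra.ι ℤ (Sum.inr 0))

/-- The generator `y` of the generalized Weyl algebra. -/
noncomputable def GWA.Y : GWA R φ z :=
  RingQuot.mkRingHom (GWARel R φ z) (FreeAlgebra.ι ℤ (Sum.inr 1))

/-- The canonical ring homomorphism `R → H(R, φ, z)`. -/
noncomputable def GWA.ofBase : R →+* GWA R φ z where
  toFun r := RingQuot.mkRingHom (GWARel R φ z) (FreeAlgebra.ι ℤ (Sum.inl r))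
  map_one' := by
    have := RingQuot.mkRingHom_rel (GWARel.one (R := R) (φ := φ) (z := z))
    simpa using this
  map_mul' r s := by
    have := RingQuot.mkRingHom_rel (GWARel.mul (φ := φ) (z := z) r s)
    simp only [map_mul] at this
    exact this.symm
  map_zero' := by
    have := RingQuot.mkRingHom_rel (GWARel.add (φ := φ) (z := z) 0 0)
    simp only [map_add, add_zero] at this
    exact add_eq_left.mp this
  map_add' r s := by
    have := RingQuot.mkRingHom_rel (GWARel.add (φ := φ) (z := z) r s)
    simp only [map_add] at this
    exact this.symm

end GWADefs

section CompletionSetup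

variable (R : Type u) [CommRing R] (φ : R ≃+* R) (z : R) (l : ℕ)

/-- The element `τ = z·φ(z)·φ²(z)⋯φ^{l−1}(z)`. -/
noncomputable def gwaTau : R := ∏ i ∈ Finset.range l, (φ ^ i) z

/-- The `(τ)`-adic completion `R̂` of `R`. -/
noncomputable abbrev RHat : Type u := AdicCompletion (Ideal.span {gwaTau R φ z l}) R

/-- The evaluation (projection) map `R̂ → R/(τⁿ)` from the `(τ)`-adic completion. -/
noncomputable def RHat.proj (n : ℕ) :
    RHat R φ z l →ₗ[R]
      R ⧸ ((Ideal.span {gwaTau R φ z l}) ^ n • ⊤ : Submodule R R) :=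
  AdicCompletion.eval (Ideal.span {gwaTau R φ z l}) R n

end CompletionSetup

/-- An action `s : R̂ → M → M` of the `(τ)`-adic completion `R̂` on a left
`H(R, φ, z)`-module `M` which is an extension of the `R`-module structure to an `R̂`-module
structure given by the canonical truncation formula: `r̂` acts on `m` through any preimage
in `R` of the image of `r̂` in `R/(τⁿ)`, where `n` is such that `τⁿ·m = 0`. -/
def IsCompletedSMul (R : Type u) [CommRing R] (φ : R ≃+* R) (z : R) (l : ℕ)
    (M : Type u) [AddCommGroup M] [Module (GWA R φ z) M]
    (s : RHat R φ z l → M → M) : Prop :=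
  (∀ (x : RHat R φ z l) (m m' : M), s x (m + m') = s x m + s x m') ∧
  (∀ (x y : RHat R φ z l) (m : M), s (x + y) m = s x m + s y m) ∧
  (∀ (x y : RHat R φ z l) (m : M), s (x * y) m = s x (s y m)) ∧
  (∀ m : M, s 1 m = m) ∧
  (∀ (r : R) (m : M), s (algebraMap R (RHat R φ z l) r) m = GWA.ofBase R φ z r • m) ∧
  (∀ (x : RHat R φ z l) (m : M) (n : ℕ) (r : R),
    (GWA.ofBase R φ z (gwaTau R φ z l)) ^ n • m = 0 →
    RHat.proj R φ z l n x = Submodule.Quotient.mk r →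
    s x m = GWA.ofBase R φ z r • m)

section AuxGWA
variable {R : Type u} [CommRing R] (φ : R ≃+* R) (z : R)

lemma GWA.Y_mul_X : GWA.Y R φ z * GWA.X R φ z = GWA.ofBase R φ z z := by
  have := RingQuot.mkRingHom_rel (GWARel.yx (R := R) (φ := φ) (z := z))
  simp only [map_mul] at this
  exact this

lemma GWA.Y_mul_ofBase (r : R) :
    GWA.Y R φ z * GWA.ofBase R φ z r = GWA.ofBase R φ z (φ r) * GWA.Y R φ z := by
  have := RingQuot.mkRingHom_rel (GWARel.yr (R := R) (φ := φ) (z := z) r)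
  simp only [map_mul] at this
  exact this

lemma GWA.Ypow_mul_ofBase (n : ℕ) (r : R) :
    GWA.Y R φ z ^ n * GWA.ofBase R φ z r
      = GWA.ofBase R φ z ((φ ^ n) r) * GWA.Y R φ z ^ n := by
  induction n generalizing r with
  | zero =>
    simp only [pow_zero, one_mul, mul_one]
    rfl
  | succ n ih =>
    rw [pow_succ, mul_assoc, GWA.Y_mul_ofBase, ← mul_assoc, ih, mul_assoc, pow_succ]
    rfl

lemma GWA.Ypow_mul_Xpow (n : ℕ) :
    GWA.Y R φ z ^ n * GWA.X R φ z ^ n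
      = GWA.ofBase R φ z (∏ i ∈ Finset.range n, (φ ^ i) z) := by
  induction n with
  | zero => simp
  | succ n ih =>
    rw [pow_succ, pow_succ', mul_assoc, ← mul_assoc (GWA.Y R φ z), GWA.Y_mul_X,
      ← mul_assoc, GWA.Ypow_mul_ofBase, mul_assoc, ih, ← map_mul,
      Finset.prod_range_succ, mul_comm]

end AuxGWA

section AuxRing
variable {R : Type u} [CommRing R] (φ : R ≃+* R) {z b : R} {l : ℕ}

lemma pow_add_apply (a c : ℕ) (w : R) : (φ ^ (a + c)) w = (φ ^ a) ((φ ^ c) w) := by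
  rw [pow_add]; rfl

lemma tau_pow_congr (hb : IsNilpotent b) (hφl : ∃ r : R, (φ ^ l) z - z = b * r) (k : ℕ) :
    IsNilpotent ((gwaTau R φ z l) ^ k - ∏ i ∈ Finset.range (k * l), (φ ^ i) z) := by
  have h1 : ∀ j : ℕ, (φ ^ (j * l)) z - z ∈ nilradical R := by
    intro j
    induction j with
    | zero => simp [show ((1 : R ≃+* R)) z = z from rfl]
    | succ j ih =>
      have heq : (φ ^ ((j + 1) * l)) z - z
          = (φ ^ (j * l)) ((φ ^ l) z - z) + ((φ ^ (j * l)) z - z) := by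
        rw [map_sub, add_mul, one_mul, pow_add_apply]
        ring
      rw [heq]
      refine add_mem ?_ ih
      obtain ⟨r, hr⟩ := hφl
      rw [hr, map_mul]
      exact Ideal.mul_mem_right _ _ (mem_nilradical.mpr (hb.map (φ ^ (j * l))))
  have h2 : ∀ j i : ℕ, Ideal.Quotient.mk (nilradical R) ((φ ^ (j * l + i)) z)
      = Ideal.Quotient.mk (nilradical R) ((φ ^ i) z) := by
    intro j i
    rw [Ideal.Quotient.eq]
    have : (φ ^ (j * l + i)) z - (φ ^ i) z = (φ ^ i) ((φ ^ (j * l)) z - z) := by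
      rw [map_sub, add_comm, pow_add_apply]
    rw [this]
    exact mem_nilradical.mpr ((mem_nilradical.mp (h1 j)).map (φ ^ i))
  rw [← mem_nilradical, ← Ideal.Quotient.eq]
  rw [map_pow, map_prod]
  induction k with
  | zero => simp
  | succ k ih =>
    rw [add_mul, one_mul, Finset.prod_range_add, pow_succ, ← ih]
    congr 1
    unfold gwaTau
    rw [map_prod]
    exact (Finset.prod_congr rfl fun i _ => h2 k i).symm

lemma mem_span_prod (hcop : ∀ i : ℕ, 1 ≤ i → i ≤ l - 1 → Ideal.span {z, (φ ^ i) z} = ⊤)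
    {r : R} (hri : ∀ i : ℕ, 1 ≤ i → i ≤ l - 1 → r ∈ Ideal.span {(φ ^ i) z}) :
    r ∈ Ideal.span {∏ i ∈ Finset.range (l - 1), (φ ^ (i + 1)) z} := by
  suffices h : ∀ j : ℕ, j ≤ l - 1 → r ∈ Ideal.span {∏ i ∈ Finset.range j, (φ ^ (i + 1)) z} from
    h (l - 1) le_rfl
  intro j hj
  induction j with
  | zero => simpa using Ideal.mem_top.mpr trivial |>.out
  | succ j ih =>
    have hj' : j ≤ l - 1 := le_trans (Nat.le_succ j) hj
    have hmemj := ih hj'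
    have hmem : r ∈ Ideal.span {(φ ^ (j + 1)) z} := hri (j + 1) (Nat.succ_le_succ (Nat.zero_le j)) hj
    have hcop' : IsCoprime (∏ i ∈ Finset.range j, (φ ^ (i + 1)) z) ((φ ^ (j + 1)) z) := by
      refine IsCoprime.prod_left fun i hi => ?_
      have hilt : i < j := Finset.mem_range.mp hi
      have h1 : (1 : R) ∈ Ideal.span {z, (φ ^ (j - i)) z} := by
        rw [hcop (j - i) (by omega) (by omega)]; trivial
      obtain ⟨u, v, huv⟩ := Ideal.mem_span_pair.mp h1
      refine ⟨(φ ^ (i + 1)) u, (φ ^ (i + 1)) v, ?_⟩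
      have := congrArg (φ ^ (i + 1)) huv
      simp only [map_add, map_mul, map_one] at this
      rw [← pow_add_apply φ (i + 1) (j - i) z] at this
      have hidx : i + 1 + (j - i) = j + 1 := by omega
      rw [hidx] at this
      exact this
    rw [Ideal.mem_span_singleton] at hmemj hmem ⊢
    rw [Finset.prod_range_succ]
    exact hcop'.mul_dvd hmemj hmem

end AuxRing
/-- (Standing completion setup.)  Let `M` be a left `H(R, φ, z)`-module on
which `x` acts locally nilpotently.  Then `τ` acts locally nilpotently on `M`, the `R`-module
structure on `M` extends uniquely to an `R̂`-module structure via the truncation formula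
(each `r̂ ∈ R̂` acts on `m` through any preimage of its image in `R/(τⁿ)`, for `n` with
`τⁿ·m = 0`), and with respect to this structure `e·M = M^{z^∞}`. -/
theorem statement16 (R : Type u) [CommRing R] (φ : R ≃+* R) (z b : R) (l : ℕ)
    (hz : z ∈ nonZeroDivisors R) (hb : IsNilpotent b) (hl : 1 ≤ l)
    (hφl : ∃ r : R, (φ ^ l) z - z = b * r)
    (hcop : ∀ i : ℕ, 1 ≤ i → i ≤ l - 1 → Ideal.span {z, (φ ^ i) z} = ⊤)
    (φhat : RHat R φ z l ≃+* RHat R φ z l)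
    (hφhat : ∀ r : R, φhat (algebraMap R (RHat R φ z l) r) = algebraMap R (RHat R φ z l) (φ r))
    (hφcont : ∀ n : ℕ, ∃ m : ℕ, ∀ x : RHat R φ z l,
      RHat.proj R φ z l m x = 0 → RHat.proj R φ z l n (φhat x) = 0)
    (e : RHat R φ z l) (he : e * e = e)
    (heval : ∃ r : R, RHat.proj R φ z l 1 e = Submodule.Quotient.mk r ∧
      r - 1 ∈ Ideal.span {z} ∧
      ∀ i : ℕ, 1 ≤ i → i ≤ l - 1 → r ∈ Ideal.span {(φ ^ i) z})
    (M : Type u) [AddCommGroup M] [Module (GWA R φ z) M]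
    (hM : ∀ m : M, ∃ n : ℕ, (GWA.X R φ z) ^ n • m = 0) :
    (∀ m : M, ∃ n : ℕ, (GWA.ofBase R φ z (gwaTau R φ z l)) ^ n • m = 0) ∧
    ∃ s : RHat R φ z l → M → M, IsCompletedSMul R φ z l M s ∧
      (∀ s' : RHat R φ z l → M → M, IsCompletedSMul R φ z l M s' → s' = s) ∧
      (∀ m : M, (∃ n : ℕ, (GWA.ofBase R φ z z) ^ n • m = 0) ↔ s e m = m) := by
  classical
  set A : R →+* GWA R φ z := GWA.ofBase R φ z with hAdef
  set τ : R := gwaTau R φ z l with hτdef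
  -- basic module computation helpers
  have hA : ∀ (r r' : R) (m : M), A (r * r') • m = A r • (A r' • m) := by
    intro r r' m; rw [map_mul, mul_smul]
  have hAadd : ∀ (r r' : R) (m : M), A (r + r') • m = A r • m + A r' • m := by
    intro r r' m; rw [map_add, add_smul]
  have hA1 : ∀ m : M, A 1 • m = m := by
    intro m; rw [map_one, one_smul]
  -- Part 1 : τ acts locally nilpotently
  have hτ : ∀ m : M, ∃ n : ℕ, (A τ) ^ n • m = 0 := by
    intro m
    obtain ⟨n, hn⟩ := hM m
    have hXnl : (GWA.X R φ z) ^ (n * l) • m = 0 := by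
      have h1 : n * l = (n * l - n) + n := by
        have := Nat.le_mul_of_pos_right n (by omega : 0 < l)
        omega
      rw [h1, pow_add, mul_smul, hn, smul_zero]
    have hP : A (∏ i ∈ Finset.range (n * l), (φ ^ i) z) • m = 0 := by
      rw [hAdef, ← GWA.Ypow_mul_Xpow, mul_smul, hXnl, smul_zero]
    obtain ⟨d, hd⟩ := tau_pow_congr φ hb hφl (z := z) (l := l) n
    refine ⟨n * d, ?_⟩
    have hmem : τ ^ (n * d) ∈ Ideal.span {∏ i ∈ Finset.range (n * l), (φ ^ i) z} := by
      set P := ∏ i ∈ Finset.range (n * l), (φ ^ i) z with hPdef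
      have hmk : Ideal.Quotient.mk (Ideal.span {P}) (τ ^ n)
          = Ideal.Quotient.mk (Ideal.span {P}) (τ ^ n - P) := by
        rw [Ideal.Quotient.eq]
        simpa using Ideal.mem_span_singleton_self P
      rw [← Ideal.Quotient.eq_zero_iff_mem, pow_mul, map_pow, hmk, ← map_pow, hd, map_zero]
    obtain ⟨c, hc⟩ := Ideal.mem_span_singleton.mp hmem
    rw [← map_pow, hc, mul_comm, hA, hAdef, ← GWA.Ypow_mul_Xpow, mul_smul, hXnl,
      smul_zero, smul_zero]
  refine ⟨hτ, ?_⟩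
  -- surjectivity of the truncations
  have lift : ∀ (n : ℕ) (x : RHat R φ z l),
      ∃ r : R, RHat.proj R φ z l n x = Submodule.Quotient.mk r := by
    intro n x
    obtain ⟨r, hr⟩ := Submodule.Quotient.mk_surjective _ (RHat.proj R φ z l n x)
    exact ⟨r, hr.symm⟩
  -- difference lemma
  have hsub : ∀ (n : ℕ) (u v : R),
      (Submodule.Quotient.mk u :
        R ⧸ ((Ideal.span {τ}) ^ n • ⊤ : Submodule R R)) = Submodule.Quotient.mk v →
      ∃ c : R, u - v = τ ^ n * c := by
    intro n u v huv
    have h1 := (Submodule.Quotient.eq _).mp huv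
    rw [Ideal.smul_eq_mul, Ideal.mul_top, Ideal.span_singleton_pow] at h1
    exact Ideal.mem_span_singleton'.mp h1 |>.imp fun c hc => by rw [← hc]; ring
  have hdiff : ∀ (n : ℕ) (u v : R) (m : M), (A τ) ^ n • m = 0 →
      (Submodule.Quotient.mk u :
        R ⧸ ((Ideal.span {τ}) ^ n • ⊤ : Submodule R R)) = Submodule.Quotient.mk v →
      A u • m = A v • m := by
    intro n u v m hm huv
    obtain ⟨c, hc⟩ := hsub n u v huv
    have h2 : A u • m = A (u - v) • m + A v • m := by
      rw [← hAadd, sub_add_cancel]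
    rw [h2, hc, mul_comm, hA, map_pow, hm, smul_zero, zero_add]
  -- transition lemma
  have htrans : ∀ (k n : ℕ), k ≤ n → ∀ (x : RHat R φ z l) (r : R),
      RHat.proj R φ z l n x = Submodule.Quotient.mk r →
      RHat.proj R φ z l k x = Submodule.Quotient.mk r := by
    intro k n h x r hx
    unfold RHat.proj at hx ⊢
    rw [AdicCompletion.eval_apply] at hx ⊢
    rw [← AdicCompletion.transitionMap_comp_eval_apply (I := Ideal.span {τ}) (M := R) h x,
      hx]
    rfl
  -- multiplicativity of truncations
  have hmul : ∀ (n : ℕ) (x y : RHat R φ z l) (u v : R),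
      RHat.proj R φ z l n x = Submodule.Quotient.mk u →
      RHat.proj R φ z l n y = Submodule.Quotient.mk v →
      RHat.proj R φ z l n (x * y) = Submodule.Quotient.mk (u * v) := by
    intro n x y u v hx hy
    unfold RHat.proj at hx hy ⊢
    rw [AdicCompletion.eval_apply] at hx hy ⊢
    rw [AdicCompletion.val_mul, hx, hy, Ideal.Quotient.mk_eq_mk, Ideal.Quotient.mk_eq_mk,
      Ideal.Quotient.mk_eq_mk, ← map_mul]
  have halg : ∀ (n : ℕ) (u : R),
      RHat.proj R φ z l n (algebraMap R (RHat R φ z l) u) = Submodule.Quotient.mk u := by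
    intro n u; rfl
  have hone : ∀ n : ℕ, RHat.proj R φ z l n (1 : RHat R φ z l)
      = Submodule.Quotient.mk (1 : R) := by
    intro n
    have := halg n 1
    rwa [map_one] at this
  -- the action
  choose nn hnn using hτ
  choose rr hrr using fun (x : RHat R φ z l) (m : M) => lift (nn m) x
  set s : RHat R φ z l → M → M := fun x m => A (rr x m) • m with hsdef
  have hL : ∀ (x : RHat R φ z l) (m : M) (n : ℕ) (r : R), (A τ) ^ n • m = 0 →
      RHat.proj R φ z l n x = Submodule.Quotient.mk r → s x m = A r • m := by
    intro x m n r hm hx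
    set N := max n (nn m) with hN
    have hmN : (A τ) ^ N • m = 0 := by
      have h1 : N = (N - n) + n := by omega
      rw [h1, pow_add, mul_smul, hm, smul_zero]
    obtain ⟨r', hr'⟩ := lift N x
    have e1 := htrans n N (le_max_left _ _) x r' hr'
    have e2 := htrans (nn m) N (le_max_right _ _) x r' hr'
    have step1 : s x m = A r' • m := by
      refine hdiff (nn m) (rr x m) r' m (hnn m) ?_
      rw [← hrr x m, e2]
    rw [step1]
    exact hdiff n r' r m hm (by rw [← e1, hx])
  have hs : IsCompletedSMul R φ z l M s := by
    refine ⟨?_, ?_, ?_, ?_, ?_, ?_⟩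
    · intro x m m'
      set N := max (nn m) (nn m') with hN
      have h1 : (A τ) ^ N • m = 0 := by
        have : N = (N - nn m) + nn m := by omega
        rw [this, pow_add, mul_smul, hnn m, smul_zero]
      have h2 : (A τ) ^ N • m' = 0 := by
        have : N = (N - nn m') + nn m' := by omega
        rw [this, pow_add, mul_smul, hnn m', smul_zero]
      have h3 : (A τ) ^ N • (m + m') = 0 := by rw [smul_add, h1, h2, add_zero]
      obtain ⟨r, hr⟩ := lift N x
      rw [hL x m N r h1 hr, hL x m' N r h2 hr, hL x (m + m') N r h3 hr, smul_add]
    · intro x y m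
      obtain ⟨u, hu⟩ := lift (nn m) x
      obtain ⟨v, hv⟩ := lift (nn m) y
      have hxy : RHat.proj R φ z l (nn m) (x + y) = Submodule.Quotient.mk (u + v) := by
        rw [map_add, hu, hv, ← Submodule.Quotient.mk_add]
      rw [hL x m (nn m) u (hnn m) hu, hL y m (nn m) v (hnn m) hv,
        hL (x + y) m (nn m) (u + v) (hnn m) hxy, hAadd]
    · intro x y m
      obtain ⟨u, hu⟩ := lift (nn m) x
      obtain ⟨v, hv⟩ := lift (nn m) y
      have hkill : (A τ) ^ (nn m) • (A v • m) = 0 := by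
        rw [← map_pow, ← hA, mul_comm, hA, map_pow, hnn m, smul_zero]
      rw [hL (x * y) m (nn m) (u * v) (hnn m) (hmul (nn m) x y u v hu hv),
        hL y m (nn m) v (hnn m) hv, hL x _ (nn m) u hkill hu, hA]
    · intro m
      rw [hL 1 m (nn m) 1 (hnn m) (hone (nn m)), hA1]
    · intro r m
      rw [hL _ m (nn m) r (hnn m) (halg (nn m) r)]
    · exact hL
  refine ⟨s, hs, ?_, ?_⟩
  · intro s' hs'
    funext x m
    obtain ⟨r, hr⟩ := lift (nn m) x
    rw [hs'.2.2.2.2.2 x m (nn m) r (hnn m) hr, hL x m (nn m) r (hnn m) hr]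
  -- Part 3 : e M = M^{z^∞}
  obtain ⟨r, hre, hrz, hri⟩ := heval
  have hτfact : τ = (∏ i ∈ Finset.range (l - 1), (φ ^ (i + 1)) z) * z := by
    rw [hτdef]
    unfold gwaTau
    rw [show l = (l - 1) + 1 by omega, Finset.prod_range_succ']
    congr 1
  set P : R := ∏ i ∈ Finset.range (l - 1), (φ ^ (i + 1)) z with hPdef
  obtain ⟨q, hq⟩ := Ideal.mem_span_singleton.mp (mem_span_prod φ hcop hri)
  obtain ⟨c₃, hc₃⟩ := Ideal.mem_span_singleton.mp hrz
  intro m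
  constructor
  · rintro ⟨n, hzn⟩
    set k := n + 1 with hk
    have hzk : (A z) ^ k • m = 0 := by
      rw [pow_succ', mul_smul, hzn, smul_zero]
    have hτk : (A τ) ^ k • m = 0 := by
      rw [← map_pow, hτfact, mul_pow, map_mul, mul_smul, map_pow A z k, hzk, smul_zero]
    obtain ⟨a, ha⟩ := lift k e
    have hsem : s e m = A a • m := hL e m k a hτk ha
    have hidem : ∃ c, a * a - a = τ ^ k * c := by
      have h1 : RHat.proj R φ z l k e = Submodule.Quotient.mk (a * a) := by
        rw [← he]; exact hmul k e e a a ha ha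
      exact hsub k (a * a) a (by rw [← h1, ha])
    have hr1 : ∃ t, (1 : R) - a = z * t := by
      have h1 : (Submodule.Quotient.mk a :
          R ⧸ ((Ideal.span {τ}) ^ 1 • ⊤ : Submodule R R)) = Submodule.Quotient.mk r := by
        rw [← htrans 1 k (by omega) e a ha, hre]
      obtain ⟨c₂, hc₂⟩ := hsub 1 a r h1
      have hc₂' : a - r = (P * z) * c₂ := by rw [hc₂, pow_one, hτfact]
      exact ⟨-(P * c₂ + c₃), by linear_combination -hc₂' - hc₃⟩
    obtain ⟨c₁, hc₁⟩ := hidem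
    obtain ⟨t, ht⟩ := hr1
    have hau : A (a * ((1 : R) - a)) • m = 0 := by
      have h2 : a * ((1 : R) - a) = τ ^ k * (-c₁) := by linear_combination -hc₁
      rw [h2, mul_comm, hA, map_pow, hτk, smul_zero]
    have hup : A (((1 : R) - a) ^ k) • m = 0 := by
      have h2 : ((1 : R) - a) ^ k = t ^ k * z ^ k := by rw [ht, mul_pow, mul_comm]
      rw [h2, hA, map_pow A z k, hzk, smul_zero]
    have hdown : ∀ j : ℕ, A (((1 : R) - a) ^ (j + 1)) • m = 0 → A ((1 : R) - a) • m = 0 := by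
      intro j
      induction j with
      | zero => intro h; rwa [pow_one] at h
      | succ j ih =>
        intro h
        refine ih ?_
        have h2 : ((1 : R) - a) ^ (j + 1)
            = ((1 : R) - a) ^ j * (a * ((1 : R) - a)) + ((1 : R) - a) ^ (j + 1 + 1) := by
          ring
        rw [h2, hAadd, hA, hau, smul_zero, h, add_zero]
    have h1a : A ((1 : R) - a) • m = 0 := hdown n hup
    have hfin : m = A a • m + A ((1 : R) - a) • m := by
      rw [← hAadd, show a + ((1 : R) - a) = 1 by ring, hA1]
    rw [hsem]
    rw [h1a, add_zero] at hfin
    exact hfin.symm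
  · intro hsm
    obtain ⟨n₀, hn₀⟩ : ∃ n, (A τ) ^ n • m = 0 := ⟨nn m, hnn m⟩
    set N := n₀ + 1 with hNdef
    have hτN : (A τ) ^ N • m = 0 := by
      rw [hNdef, pow_succ', mul_smul, hn₀, smul_zero]
    obtain ⟨a, ha⟩ := lift N e
    have ham : A a • m = m := by rw [← hL e m N a hτN ha]; exact hsm
    have h1 : (Submodule.Quotient.mk a :
        R ⧸ ((Ideal.span {τ}) ^ 1 • ⊤ : Submodule R R)) = Submodule.Quotient.mk r := by
      rw [← htrans 1 N (by omega) e a ha, hre]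
    obtain ⟨c₂, hc₂⟩ := hsub 1 a r h1
    have hc₂' : a - r = (P * z) * c₂ := by rw [hc₂, pow_one, hτfact]
    have hd : z * a = τ * (q + z * c₂) := by
      rw [hτfact]; linear_combination z * hc₂' + z * hq
    set d := q + z * c₂ with hddef
    have e1 : A z • m = A (τ * d) • m := by
      conv_lhs => rw [← ham]
      rw [← hA, hd]
    have hzj : ∀ j : ℕ, (A z) ^ j • m = A (d ^ j * τ ^ j) • m := by
      intro j
      induction j with
      | zero => simpa using (hA1 m).symm
      | succ j ih =>
        calc (A z) ^ (j + 1) • m = A (z ^ (j + 1)) • m := by rw [map_pow]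
          _ = A (z ^ j) • (A z • m) := by rw [pow_succ, hA]
          _ = A (z ^ j) • (A (τ * d) • m) := by rw [e1]
          _ = A (τ * d) • (A (z ^ j) • m) := by rw [← hA, ← hA, mul_comm]
          _ = A (τ * d) • ((A z) ^ j • m) := by rw [map_pow]
          _ = A (τ * d) • (A (d ^ j * τ ^ j) • m) := by rw [ih]
          _ = A (d ^ (j + 1) * τ ^ (j + 1)) • m := by
              rw [← hA]; congr 2; ring
    refine ⟨N, ?_⟩
    rw [hzj N, hA, map_pow A τ N, hτN, smul_zero]
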